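/- Let d ≥ 2, let Δ = { y ∈ ℝ^{d−1} : y_i ≥ 0 for all i, Σ_{i=1}^{d−1} y_i ≤ 1 }, and for y ∈ Δ write y_d := 1 − Σ_{i=1}^{d−1} y_i. For counts k ∈ ℕ^d with Σ_{i=1}^d k_i = n, define the multinomial probability q(k; y) = (n! / ∏_{i=1}^d k_i!) ∏_{i=1}^d y_i^{k_i}. Suppose x ∈ Δ has x_i > 0 for all i ≤ d−1 and x_d = 1 − Σ_{i<d} x_i > 0, and suppose k⁽ⁿ⁾ ∈ ℕ^d satisfies Σ_i k_i⁽ⁿ⁾ = n and k_i⁽ⁿ⁾ / n → x_i for all i ∈ {1,…,d}. Then for all continuous functions F, G : Δ → ℝ with F ≥ 0 on Δ and G > 0 on Δ, lim_{n→∞} ( ∫_Δ q(k⁽ⁿ⁾; y) F(y) dy ) / ( ∫_Δ q(k⁽ⁿ⁾; y) G(y) dy ) = F(x) / G(x), where dy denotes (d−1)-dimensional Lebesgue measure on Δ. -/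

import Mathlib

open MeasureTheory Filter

/-- Extension of `y ∈ Δ ⊆ ℝ^{d−1}` to a probability vector in `ℝ^d`, with last
coordinate `y_d = 1 − ∑_{i<d} y_i`. -/
noncomputable def probExt (d : ℕ) (y : Fin (d - 1) → ℝ) : Fin d → ℝ :=
  fun i => if h : (i : ℕ) < d - 1 then y ⟨i, h⟩ else 1 - ∑ j, y j

/-- The multinomial probability `q(k; y) = (n!/∏ kᵢ!) ∏ yᵢ^{kᵢ}` of counts `k` with
`∑ kᵢ = n` under success probabilities `y`. -/
noncomputable def multinomialProb {d : ℕ} (n : ℕ) (k : Fin d → ℕ) (y : Fin d → ℝ) : ℝ :=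
  ((n.factorial : ℝ) / ∏ i, ((k i).factorial : ℝ)) * ∏ i, (y i) ^ (k i)

lemma sum_probExt {d : ℕ} (hd : 2 ≤ d) (y : Fin (d - 1) → ℝ) :
    ∑ i, probExt d y i = 1 := by
  have h1 : d - 1 + 1 = d := by omega
  set f : ℕ → ℝ := fun j => if h : j < d - 1 then y ⟨j, h⟩ else 1 - ∑ j, y j with hf
  set g : ℕ → ℝ := fun j => if h : j < d - 1 then y ⟨j, h⟩ else 0 with hg
  have e1 : ∑ i : Fin d, probExt d y i = ∑ j ∈ Finset.range d, f j :=
    Fin.sum_univ_eq_sum_range f d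
  have e2 : ∑ j ∈ Finset.range (d - 1), f j = ∑ j ∈ Finset.range (d - 1), g j := by
    refine Finset.sum_congr rfl fun j hj => ?_
    have hj' : j < d - 1 := Finset.mem_range.mp hj
    simp [hf, hg, hj']
  have e3 : ∑ j ∈ Finset.range (d - 1), g j = ∑ i : Fin (d - 1), y i := by
    rw [← Fin.sum_univ_eq_sum_range g (d - 1)]
    refine Finset.sum_congr rfl fun i _ => ?_
    simp [hg, i.isLt]
  have e4 : f (d - 1) = 1 - ∑ j, y j := by simp [hf]
  rw [e1, ← h1, Finset.sum_range_succ, e2, e3, e4]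
  ring

lemma continuous_probExt {d : ℕ} (i : Fin d) :
    Continuous fun y : Fin (d - 1) → ℝ => probExt d y i := by
  unfold probExt
  split
  · exact continuous_apply _
  · exact continuous_const.sub (continuous_finset_sum _ fun j _ => continuous_apply j)

lemma probExt_nonneg {d : ℕ} {y : Fin (d - 1) → ℝ}
    (hy : (∀ i, 0 ≤ y i) ∧ ∑ i, y i ≤ 1) (i : Fin d) : 0 ≤ probExt d y i := by
  unfold probExt
  split
  · exact hy.1 _
  · linarith [hy.2]

lemma probExt_le_one {d : ℕ} (hd : 2 ≤ d) {y : Fin (d - 1) → ℝ}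
    (hy : (∀ i, 0 ≤ y i) ∧ ∑ i, y i ≤ 1) (i : Fin d) : probExt d y i ≤ 1 := by
  have hs := sum_probExt hd y
  have hnn := probExt_nonneg hy
  calc probExt d y i ≤ ∑ j, probExt d y j :=
        Finset.single_le_sum (fun j _ => hnn j) (Finset.mem_univ i)
    _ = 1 := hs

lemma gibbs_strict {d : ℕ} (p q : Fin d → ℝ) (hp : ∀ i, 0 ≤ p i) (hps : ∑ i, p i = 1)
    (hq : ∀ i, 0 < q i) (hqs : ∑ i, q i = 1) (hne : p ≠ q) :
    ∏ i, p i ^ (q i) < ∏ i, q i ^ (q i) := by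
  have hR : 0 < ∏ i, q i ^ (q i) :=
    Finset.prod_pos fun i _ => Real.rpow_pos_of_pos (hq i) _
  by_cases hz : ∃ i, p i = 0
  · obtain ⟨i, hi⟩ := hz
    have : ∏ j, p j ^ (q j) = 0 :=
      Finset.prod_eq_zero (Finset.mem_univ i) (by rw [hi]; exact Real.zero_rpow (hq i).ne')
    rw [this]; exact hR
  push_neg at hz
  have hp' : ∀ i, 0 < p i := fun i => (hp i).lt_of_ne' (hz i)
  -- non-constancy of i ↦ p i / q i
  have hnc : ∃ j ∈ Finset.univ, ∃ l ∈ Finset.univ,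
      p j / q j ≠ p l / (q l : ℝ) := by
    by_contra hcon
    push_neg at hcon
    apply hne
    have hne' : (Finset.univ : Finset (Fin d)).Nonempty := by
      by_contra hu
      rw [Finset.not_nonempty_iff_eq_empty] at hu
      rw [hu, Finset.sum_empty] at hps
      norm_num at hps
    obtain ⟨i₀, _⟩ := hne'
    set c := p i₀ / q i₀ with hc
    have hall : ∀ i, p i = c * q i := by
      intro i
      have h := hcon i (Finset.mem_univ i) i₀ (Finset.mem_univ i₀)
      rw [hc, ← h, div_mul_cancel₀ _ (hq i).ne']
    have hc1 : c = 1 := by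
      have h2 : ∑ i, p i = c * ∑ i, q i := by
        rw [Finset.mul_sum]
        exact Finset.sum_congr rfl fun i _ => hall i
      rw [hps, hqs, mul_one] at h2
      exact h2.symm
    funext i
    rw [hall i, hc1, one_mul]
  have hj := strictConcaveOn_log_Ioi.lt_map_sum
    (fun i _ => hq i) hqs (fun i _ => Set.mem_Ioi.mpr (div_pos (hp' i) (hq i))) hnc
  have hsum1 : ∑ i, q i • (p i / q i) = 1 := by
    rw [← hps]
    exact Finset.sum_congr rfl fun i _ => by
      rw [smul_eq_mul, mul_div_cancel₀ _ (hq i).ne']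
  rw [hsum1, Real.log_one] at hj
  have hlt : ∑ i, q i * Real.log (p i) < ∑ i, q i * Real.log (q i) := by
    have : ∑ i, q i • Real.log (p i / q i)
        = ∑ i, q i * Real.log (p i) - ∑ i, q i * Real.log (q i) := by
      rw [← Finset.sum_sub_distrib]
      exact Finset.sum_congr rfl fun i _ => by
        rw [smul_eq_mul, Real.log_div (hp' i).ne' (hq i).ne']; ring
    linarith [this ▸ hj]
  calc ∏ i, p i ^ (q i) = Real.exp (∑ i, q i * Real.log (p i)) := by
        rw [Real.exp_sum]
        exact Finset.prod_congr rfl fun i _ => by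
          rw [Real.rpow_def_of_pos (hp' i), mul_comm]
    _ < Real.exp (∑ i, q i * Real.log (q i)) := Real.exp_lt_exp.mpr hlt
    _ = ∏ i, q i ^ (q i) := by
        rw [Real.exp_sum]
        exact Finset.prod_congr rfl fun i _ => by
          rw [Real.rpow_def_of_pos (hq i), mul_comm]

lemma simplex_closed {d : ℕ} :
    IsClosed {y : Fin (d - 1) → ℝ | (∀ i, 0 ≤ y i) ∧ ∑ i, y i ≤ 1} := by
  have : {y : Fin (d - 1) → ℝ | (∀ i, 0 ≤ y i) ∧ ∑ i, y i ≤ 1} =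
      (⋂ i, {y | 0 ≤ y i}) ∩ {y | ∑ i, y i ≤ 1} := by
    ext y; simp [Set.mem_iInter]
  rw [this]
  exact (isClosed_iInter fun i => isClosed_le continuous_const (continuous_apply i)).inter
    (isClosed_le (continuous_finset_sum _ fun i _ => continuous_apply i) continuous_const)

lemma simplex_compact {d : ℕ} :
    IsCompact {y : Fin (d - 1) → ℝ | (∀ i, 0 ≤ y i) ∧ ∑ i, y i ≤ 1} := by
  apply Metric.isCompact_of_isClosed_isBounded simplex_closed
  apply (Metric.isBounded_closedBall (x := (0 : Fin (d - 1) → ℝ)) (r := 1)).subset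
  intro y hy
  rw [Metric.mem_closedBall, dist_zero_right]
  refine (pi_norm_le_iff_of_nonneg zero_le_one).mpr fun i => ?_
  rw [Real.norm_eq_abs, abs_le]
  constructor
  · linarith [hy.1 i]
  · calc y i ≤ ∑ j, y j := Finset.single_le_sum (fun j _ => hy.1 j) (Finset.mem_univ i)
      _ ≤ 1 := hy.2

/-- Control of `probExt` on a small closed ball around an interior point. -/
lemma closedBall_bounds {d : ℕ} (hd : 2 ≤ d) {Δ : Set (Fin (d - 1) → ℝ)}
    (hΔ : Δ = {y | (∀ i, 0 ≤ y i) ∧ ∑ i, y i ≤ 1})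
    {x : Fin (d - 1) → ℝ} {ρ : ℝ} (hρ : 0 < ρ)
    (hρm : ∀ i : Fin d, ρ < probExt d x i) :
    Metric.closedBall x (ρ / d) ⊆ Δ ∧
      ∀ y ∈ Metric.closedBall x (ρ / d), ∀ i, probExt d x i - ρ ≤ probExt d y i := by
  have hd0 : (0:ℝ) < d := by positivity
  have h1d : (1:ℝ) ≤ d := by exact_mod_cast (by omega : 1 ≤ d)
  have hxlast : probExt d x ⟨d - 1, by omega⟩ = 1 - ∑ j, x j := by
    simp [probExt]
  have key : ∀ y ∈ Metric.closedBall x (ρ / d),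
      (∀ i : Fin (d - 1), |y i - x i| ≤ ρ / d) ∧ |∑ j, y j - ∑ j, x j| ≤ ρ := by
    intro y hy
    rw [Metric.mem_closedBall, dist_eq_norm] at hy
    have hcoord : ∀ i : Fin (d - 1), |y i - x i| ≤ ρ / d := by
      intro i
      have h := norm_le_pi_norm (y - x) i
      rw [Pi.sub_apply, Real.norm_eq_abs] at h
      exact h.trans hy
    refine ⟨hcoord, ?_⟩
    calc |∑ j, y j - ∑ j, x j| = |∑ j, (y j - x j)| := by rw [Finset.sum_sub_distrib]
      _ ≤ ∑ j, |y j - x j| := Finset.abs_sum_le_sum_abs _ _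
      _ ≤ Finset.univ.card • (ρ / d) := Finset.sum_le_card_nsmul _ _ _ fun i _ => hcoord i
      _ = (d - 1 : ℕ) * (ρ / d) := by rw [Finset.card_univ, Fintype.card_fin, nsmul_eq_mul]
      _ ≤ d * (ρ / d) := by
          apply mul_le_mul_of_nonneg_right _ (by positivity)
          exact_mod_cast Nat.cast_le.mpr (Nat.sub_le d 1)
      _ = ρ := by field_simp
  constructor
  · intro y hy
    obtain ⟨hcoord, hsum⟩ := key y hy
    rw [hΔ]
    constructor
    · intro i
      have hxi : ρ < x i := by
        have := hρm ⟨(i : ℕ), by omega⟩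
        simpa [probExt, i.isLt] using this
      have := abs_le.mp (hcoord i)
      have hρd : ρ / d ≤ ρ := by
        rw [div_le_iff₀ hd0]
        nlinarith [mul_le_mul_of_nonneg_left h1d hρ.le]
      linarith
    · have hlast := hρm ⟨d - 1, by omega⟩
      rw [hxlast] at hlast
      have := abs_le.mp hsum
      linarith
  · intro y hy i
    obtain ⟨hcoord, hsum⟩ := key y hy
    by_cases h : (i : ℕ) < d - 1
    · have e1 : probExt d y i = y ⟨i, h⟩ := dif_pos h
      have e2 : probExt d x i = x ⟨i, h⟩ := dif_pos h
      rw [e1, e2]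
      have := abs_le.mp (hcoord ⟨i, h⟩)
      have hρd : ρ / d ≤ ρ := by
        rw [div_le_iff₀ hd0]
        nlinarith [mul_le_mul_of_nonneg_left h1d hρ.le]
      linarith
    · have e1 : probExt d y i = 1 - ∑ j, y j := dif_neg h
      have e2 : probExt d x i = 1 - ∑ j, x j := dif_neg h
      rw [e1, e2]
      have := abs_le.mp hsum
      linarith

set_option maxHeartbeats 2000000 in
lemma main_est (d : ℕ) (hd : 2 ≤ d)
    (Δ : Set (Fin (d - 1) → ℝ))
    (hΔ : Δ = {y | (∀ i, 0 ≤ y i) ∧ ∑ i, y i ≤ 1})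
    (x : Fin (d - 1) → ℝ) (hxΔ : x ∈ Δ)
    (hxpos : ∀ i : Fin d, 0 < probExt d x i)
    (k : ℕ → Fin d → ℕ)
    (hfreq : ∀ i : Fin d,
      Tendsto (fun n : ℕ => (k n i : ℝ) / n) atTop (nhds (probExt d x i)))
    (δ : ℝ) (hδ : 0 < δ) :
    ∃ c₁ c₂ r : ℝ, 0 ≤ c₁ ∧ c₁ < c₂ ∧ 0 < r ∧ Metric.closedBall x r ⊆ Δ ∧
      ∀ᶠ n : ℕ in atTop,
        (∀ y ∈ Δ \ Metric.ball x δ, ∏ i, (probExt d y i) ^ (k n i) ≤ c₁ ^ n) ∧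
        (∀ y ∈ Metric.closedBall x r, c₂ ^ n ≤ ∏ i, (probExt d y i) ^ (k n i)) := by
  have : Nonempty (Fin d) := ⟨⟨0, by omega⟩⟩
  set x' : Fin d → ℝ := probExt d x with hx'
  have hx'sum : ∑ i, x' i = 1 := sum_probExt hd x
  have hxmem : (∀ i, 0 ≤ x i) ∧ ∑ i, x i ≤ 1 := by rwa [hΔ] at hxΔ
  have hx'le1 : ∀ i, x' i ≤ 1 := probExt_le_one hd hxmem
  set m : ℝ := Finset.univ.inf' Finset.univ_nonempty x' with hm
  have hmpos : 0 < m := (Finset.lt_inf'_iff _).mpr fun i _ => hxpos i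
  have hmle : ∀ i, m ≤ x' i := fun i => Finset.inf'_le _ (Finset.mem_univ i)
  set A : ℝ := ∏ i, x' i ^ (x' i) with hA
  have hApos : 0 < A := Finset.prod_pos fun i _ => Real.rpow_pos_of_pos (hxpos i) _
  have hA1 : A ≤ 1 :=
    Finset.prod_le_one (fun i _ => (Real.rpow_pos_of_pos (hxpos i) _).le)
      (fun i _ => Real.rpow_le_one (hxpos i).le (hx'le1 i) (hxpos i).le)
  -- the Gibbs functional and its strict maximum property
  set Φ : (Fin (d - 1) → ℝ) → ℝ := fun y => ∏ i, (probExt d y i) ^ (x' i) with hΦ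
  have hΦcont : Continuous Φ := by
    apply continuous_finset_prod
    intro i _
    rw [continuous_iff_continuousAt]
    intro y
    exact (Real.continuousAt_rpow_const _ _ (Or.inr (hxpos i).le)).comp
      (continuous_probExt i).continuousAt
  have hΔc : IsCompact Δ := hΔ ▸ simplex_compact
  -- strict bound on the far set
  have hfar : ∃ Af, 0 ≤ Af ∧ Af < A ∧ ∀ y ∈ Δ \ Metric.ball x δ, Φ y ≤ Af := by
    rcases (Δ \ Metric.ball x δ).eq_empty_or_nonempty with he | hne
    · exact ⟨A / 2, by positivity, half_lt_self hApos, by simp [he]⟩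
    · have hfc : IsCompact (Δ \ Metric.ball x δ) := hΔc.diff Metric.isOpen_ball
      obtain ⟨y₀, hy₀, hmax⟩ := hfc.exists_isMaxOn hne hΦcont.continuousOn
      have hy₀Δ : y₀ ∈ Δ := hy₀.1
      have hy₀mem : (∀ i, 0 ≤ y₀ i) ∧ ∑ i, y₀ i ≤ 1 := by rwa [hΔ] at hy₀Δ
      refine ⟨Φ y₀, ?_, ?_, fun y hy => hmax hy⟩
      · exact Finset.prod_nonneg fun i _ =>
          Real.rpow_nonneg (probExt_nonneg hy₀mem i) _
      · apply gibbs_strict (probExt d y₀) x' (probExt_nonneg hy₀mem)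
          (sum_probExt hd y₀) hxpos hx'sum
        intro hcon
        apply hy₀.2
        have hyx : y₀ = x := by
          funext i
          have h := congrFun hcon ⟨(i : ℕ), by omega⟩
          have hi : ((⟨(i : ℕ), by omega⟩ : Fin d) : ℕ) < d - 1 := i.isLt
          rw [show probExt d y₀ ⟨(i : ℕ), by omega⟩ = y₀ i from dif_pos hi,
            show x' ⟨(i : ℕ), by omega⟩ = x i from dif_pos hi] at h
          exact h
        rw [hyx]
        exact Metric.mem_ball_self hδ
  obtain ⟨Af, hAf0, hAfA, hAfb⟩ := hfar
  set θ₁ : ℝ := (Af + A) / 2 with hθ₁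
  have hθ₁pos : 0 < θ₁ := by positivity
  have hAfθ₁ : Af < θ₁ := by rw [hθ₁]; linarith
  have hθ₁A : θ₁ < A := by rw [hθ₁]; linarith
  set θ₂ : ℝ := (θ₁ + A) / 2 with hθ₂
  have hθ₁θ₂ : θ₁ < θ₂ := by rw [hθ₂]; linarith
  have hθ₂A : θ₂ < A := by rw [hθ₂]; linarith
  set η : ℝ := min (1 / 2) (θ₁ ^ (2 / m)) with hη
  have hηpos : 0 < η := lt_min (by norm_num) (Real.rpow_pos_of_pos hθ₁pos _)
  have hη1 : η ≤ 1 := le_trans (min_le_left _ _) (by norm_num)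
  have hηθ : η ^ (m / 2) ≤ θ₁ := by
    calc η ^ (m / 2) ≤ (θ₁ ^ (2 / m)) ^ (m / 2) :=
          Real.rpow_le_rpow hηpos.le (min_le_right _ _) (by positivity)
      _ = θ₁ ^ ((2 / m) * (m / 2)) := (Real.rpow_mul hθ₁pos.le _ _).symm
      _ = θ₁ := by
          rw [show (2 / m) * (m / 2) = 1 by field_simp, Real.rpow_one]
  -- choose ρ
  have hcont1 : Tendsto (fun ρ : ℝ => Af * η ^ (-((d : ℝ) * ρ))) (nhds 0) (nhds Af) := by
    have hc : Continuous fun ρ : ℝ => Af * η ^ (-((d : ℝ) * ρ)) := by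
      have he : (fun ρ : ℝ => η ^ (-((d : ℝ) * ρ)))
          = fun ρ => Real.exp (Real.log η * (-((d : ℝ) * ρ))) := by
        funext ρ; rw [Real.rpow_def_of_pos hηpos]
      exact continuous_const.mul (he ▸ (Real.continuous_exp.comp (by continuity)))
    have := hc.continuousAt (x := 0)
    simpa [ContinuousAt, Real.rpow_zero] using this
  have hcont2 : Tendsto (fun ρ : ℝ => ∏ i, (x' i - ρ) ^ (x' i + ρ)) (nhds 0) (nhds A) := by
    have : Tendsto (fun ρ : ℝ => ∏ i, (x' i - ρ) ^ (x' i + ρ)) (nhds 0)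
        (nhds (∏ i, x' i ^ (x' i))) := by
      apply tendsto_finset_prod
      intro i _
      have h3 : ContinuousAt (fun ρ : ℝ => (x' i - ρ) ^ (x' i + ρ)) 0 := by
        apply ContinuousAt.rpow (by fun_prop) (by fun_prop)
        left
        simpa using (hxpos i).ne'
      simpa [ContinuousAt, sub_zero, add_zero] using h3
    exact this
  have hev1 : ∀ᶠ ρ in nhdsWithin 0 (Set.Ioi 0), Af * η ^ (-((d : ℝ) * ρ)) < θ₂ :=
    (hcont1.mono_left nhdsWithin_le_nhds).eventually_lt_const (by linarith)
  have hev2 : ∀ᶠ ρ in nhdsWithin 0 (Set.Ioi 0), θ₂ < ∏ i, (x' i - ρ) ^ (x' i + ρ) :=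
    (hcont2.mono_left nhdsWithin_le_nhds).eventually_const_lt (by linarith)
  have hev3 : ∀ᶠ ρ in nhdsWithin 0 (Set.Ioi 0), ρ < m / 2 :=
    (tendsto_id.mono_left nhdsWithin_le_nhds).eventually_lt_const (half_pos hmpos)
  have hev4 : ∀ᶠ ρ : ℝ in nhdsWithin 0 (Set.Ioi 0), 0 < ρ :=
    eventually_mem_nhdsWithin.mono fun ρ h => h
  obtain ⟨ρ, hρ1, hρ2, hρ3, hρ4⟩ := (hev1.and (hev2.and (hev3.and hev4))).exists
  set c₁ : ℝ := max (η ^ (m / 2)) (Af * η ^ (-((d : ℝ) * ρ))) with hc₁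
  set c₂ : ℝ := ∏ i, (x' i - ρ) ^ (x' i + ρ) with hc₂
  have hηm2pos : 0 < η ^ (m / 2) := Real.rpow_pos_of_pos hηpos _
  have hc₁0 : 0 ≤ c₁ := le_trans hηm2pos.le (le_max_left _ _)
  have hc₁c₂ : c₁ < c₂ := max_lt (lt_of_le_of_lt hηθ (hθ₁θ₂.trans hρ2)) (hρ1.trans hρ2)
  have hρm : ∀ i : Fin d, ρ < x' i := fun i => by have := hmle i; linarith
  obtain ⟨hball, hballb⟩ := closedBall_bounds hd hΔ hρ4 hρm
  refine ⟨c₁, c₂, ρ / d, hc₁0, hc₁c₂, by positivity, hball, ?_⟩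
  -- eventual bounds on the counts
  have hkev : ∀ᶠ n : ℕ in atTop, ∀ i : Fin d,
      (x' i - ρ) * n ≤ (k n i : ℝ) ∧ (k n i : ℝ) ≤ (x' i + ρ) * n := by
    have h5 : ∀ i : Fin d, ∀ᶠ n : ℕ in atTop, |(k n i : ℝ) / n - x' i| ≤ ρ := by
      intro i
      have := (hfreq i).eventually (Metric.closedBall_mem_nhds (x' i) hρ4)
      simpa [Metric.mem_closedBall, Real.dist_eq] using this
    filter_upwards [eventually_all.mpr h5, eventually_gt_atTop 0] with n hn hnpos
    intro i
    have hn' : (0 : ℝ) < n := by exact_mod_cast hnpos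
    have h := abs_le.mp (hn i)
    have hdiv : (k n i : ℝ) = ((k n i : ℝ) / n) * n := (div_mul_cancel₀ _ hn'.ne').symm
    constructor
    · rw [hdiv]; exact mul_le_mul_of_nonneg_right (by linarith [h.1]) hn'.le
    · rw [hdiv]; exact mul_le_mul_of_nonneg_right (by linarith [h.2]) hn'.le
  filter_upwards [hkev] with n hkn
  constructor
  · -- upper bound on the far set
    intro y hy
    have hyΔ : y ∈ Δ := hy.1
    have hymem : (∀ i, 0 ≤ y i) ∧ ∑ i, y i ≤ 1 := by rwa [hΔ] at hyΔ
    set p : Fin d → ℝ := probExt d y with hp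
    have pnn : ∀ i, 0 ≤ p i := probExt_nonneg hymem
    have ple1 : ∀ i, p i ≤ 1 := probExt_le_one hd hymem
    by_cases hsmall : ∃ j, p j < η
    · obtain ⟨j, hj⟩ := hsmall
      have hkj : (m / 2) * n ≤ (k n j : ℝ) := by
        have h1 : m / 2 ≤ x' j - ρ := by have := hmle j; linarith
        calc (m / 2) * n ≤ (x' j - ρ) * n :=
              mul_le_mul_of_nonneg_right h1 (Nat.cast_nonneg n)
          _ ≤ (k n j : ℝ) := (hkn j).1
      calc ∏ i, p i ^ k n i
          = p j ^ k n j * ∏ i ∈ Finset.univ.erase j, p i ^ k n i :=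
            (Finset.mul_prod_erase _ _ (Finset.mem_univ j)).symm
        _ ≤ p j ^ k n j * 1 := by
            apply mul_le_mul_of_nonneg_left _ (pow_nonneg (pnn j) _)
            exact Finset.prod_le_one (fun i _ => pow_nonneg (pnn i) _)
              (fun i _ => pow_le_one₀ (pnn i) (ple1 i))
        _ = p j ^ k n j := mul_one _
        _ ≤ η ^ k n j := pow_le_pow_left₀ (pnn j) hj.le _
        _ = η ^ ((k n j : ℕ) : ℝ) := (Real.rpow_natCast η _).symm
        _ ≤ η ^ ((m / 2) * n) := Real.rpow_le_rpow_of_exponent_ge hηpos hη1 hkj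
        _ = (η ^ (m / 2)) ^ n := by
            rw [Real.rpow_mul hηpos.le, Real.rpow_natCast]
        _ ≤ c₁ ^ n := pow_le_pow_left₀ hηm2pos.le (le_max_left _ _) n
    · push_neg at hsmall
      have hppos : ∀ i, 0 < p i := fun i => lt_of_lt_of_le hηpos (hsmall i)
      have hyfar : Φ y ≤ Af := hAfb y hy
      have hΦynn : 0 ≤ Φ y := Finset.prod_nonneg fun i _ => Real.rpow_nonneg (pnn i) _
      have hfac : ∀ i, p i ^ k n i
          = p i ^ ((n : ℝ) * x' i) * p i ^ ((k n i : ℝ) - n * x' i) := by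
        intro i
        have he : (n : ℝ) * x' i + ((k n i : ℝ) - n * x' i) = (k n i : ℝ) := by ring
        rw [← Real.rpow_add (hppos i), he, Real.rpow_natCast]
      have hsplit : ∏ i, p i ^ k n i
          = (Φ y) ^ n * ∏ i, p i ^ ((k n i : ℝ) - n * x' i) := by
        calc ∏ i, p i ^ k n i
            = ∏ i, (p i ^ ((n : ℝ) * x' i) * p i ^ ((k n i : ℝ) - n * x' i)) :=
              Finset.prod_congr rfl fun i _ => hfac i
          _ = (∏ i, p i ^ ((n : ℝ) * x' i)) * ∏ i, p i ^ ((k n i : ℝ) - n * x' i) :=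
              Finset.prod_mul_distrib
          _ = (Φ y) ^ n * ∏ i, p i ^ ((k n i : ℝ) - n * x' i) := by
              congr 1
              rw [hΦ, ← Finset.prod_pow]
              refine Finset.prod_congr rfl fun i _ => ?_
              rw [← Real.rpow_natCast (p i ^ x' i) n, ← Real.rpow_mul (pnn i)]
              ring_nf
      have hsecond : ∏ i, p i ^ ((k n i : ℝ) - n * x' i) ≤ (η ^ (-((d : ℝ) * ρ))) ^ n := by
        have hbound : ∀ i, p i ^ ((k n i : ℝ) - n * x' i) ≤ η ^ (-(ρ * n)) := by
          intro i
          rcases le_or_gt 0 ((k n i : ℝ) - n * x' i) with hs | hs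
          · calc p i ^ ((k n i : ℝ) - n * x' i) ≤ 1 :=
                Real.rpow_le_one (pnn i) (ple1 i) hs
              _ ≤ η ^ (-(ρ * n)) :=
                Real.one_le_rpow_of_pos_of_le_one_of_nonpos hηpos hη1
                  (neg_nonpos.mpr (by positivity))
          · calc p i ^ ((k n i : ℝ) - n * x' i) ≤ η ^ ((k n i : ℝ) - n * x' i) :=
                Real.rpow_le_rpow_of_nonpos hηpos (hsmall i) hs.le
              _ ≤ η ^ (-(ρ * n)) := by
                  apply Real.rpow_le_rpow_of_exponent_ge hηpos hη1
                  have h1 := (hkn i).1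
                  nlinarith [h1]
        calc ∏ i, p i ^ ((k n i : ℝ) - n * x' i) ≤ ∏ _i : Fin d, η ^ (-(ρ * n)) :=
              Finset.prod_le_prod (fun i _ => Real.rpow_nonneg (pnn i) _)
                (fun i _ => hbound i)
          _ = (η ^ (-(ρ * n))) ^ d := by
              rw [Finset.prod_const, Finset.card_univ, Fintype.card_fin]
          _ = (η ^ (-((d : ℝ) * ρ))) ^ n := by
              rw [← Real.rpow_natCast (η ^ (-(ρ * n))) d, ← Real.rpow_mul hηpos.le,
                ← Real.rpow_natCast (η ^ (-((d : ℝ) * ρ))) n, ← Real.rpow_mul hηpos.le]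
              ring_nf
      calc ∏ i, p i ^ k n i
          = (Φ y) ^ n * ∏ i, p i ^ ((k n i : ℝ) - n * x' i) := hsplit
        _ ≤ Af ^ n * (η ^ (-((d : ℝ) * ρ))) ^ n := by
            apply mul_le_mul (pow_le_pow_left₀ hΦynn hyfar n) hsecond
              (Finset.prod_nonneg fun i _ => Real.rpow_nonneg (pnn i) _)
              (pow_nonneg hAf0 n)
        _ = (Af * η ^ (-((d : ℝ) * ρ))) ^ n := (mul_pow _ _ n).symm
        _ ≤ c₁ ^ n :=
            pow_le_pow_left₀ (mul_nonneg hAf0 (Real.rpow_nonneg hηpos.le _))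
              (le_max_right _ _) n
  · -- lower bound on the small ball
    intro y hy
    have hlow : ∀ i, x' i - ρ ≤ probExt d y i := hballb y hy
    have hbpos : ∀ i : Fin d, 0 < x' i - ρ := fun i => by have := hρm i; linarith
    have hb1 : ∀ i : Fin d, x' i - ρ ≤ 1 := fun i => by
      have := hx'le1 i; linarith [hρ4]
    calc c₂ ^ n = ∏ i, ((x' i - ρ) ^ (x' i + ρ)) ^ n := by rw [hc₂, ← Finset.prod_pow]
      _ = ∏ i, (x' i - ρ) ^ ((x' i + ρ) * n) := Finset.prod_congr rfl fun i _ => by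
          rw [← Real.rpow_natCast ((x' i - ρ) ^ (x' i + ρ)) n, ← Real.rpow_mul (hbpos i).le]
      _ ≤ ∏ i, (x' i - ρ) ^ ((k n i : ℝ)) := Finset.prod_le_prod
          (fun i _ => (Real.rpow_pos_of_pos (hbpos i) _).le)
          (fun i _ => Real.rpow_le_rpow_of_exponent_ge (hbpos i) (hb1 i) (hkn i).2)
      _ = ∏ i, (x' i - ρ) ^ (k n i) := Finset.prod_congr rfl fun i _ =>
          Real.rpow_natCast _ _
      _ ≤ ∏ i, (probExt d y i) ^ (k n i) := Finset.prod_le_prod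
          (fun i _ => pow_nonneg (hbpos i).le _)
          (fun i _ => pow_le_pow_left₀ (hbpos i).le (hlow i) _)

set_option maxHeartbeats 2000000 in
lemma weighted_ratio_tendsto (d : ℕ) (hd : 2 ≤ d)
    (Δ : Set (Fin (d - 1) → ℝ))
    (hΔ : Δ = {y | (∀ i, 0 ≤ y i) ∧ ∑ i, y i ≤ 1})
    (x : Fin (d - 1) → ℝ) (hxΔ : x ∈ Δ)
    (hxpos : ∀ i : Fin d, 0 < probExt d x i)
    (k : ℕ → Fin d → ℕ)
    (hfreq : ∀ i : Fin d,
      Tendsto (fun n : ℕ => (k n i : ℝ) / n) atTop (nhds (probExt d x i)))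
    (H : (Fin (d - 1) → ℝ) → ℝ) (hH : ContinuousOn H Δ) :
    Tendsto
      (fun n : ℕ =>
        (∫ y in Δ, (∏ i, (probExt d y i) ^ (k n i)) * H y) /
        (∫ y in Δ, ∏ i, (probExt d y i) ^ (k n i)))
      atTop (nhds (H x)) := by
  have hΔc : IsCompact Δ := hΔ ▸ simplex_compact
  have hΔm : MeasurableSet Δ := (hΔ ▸ simplex_closed : IsClosed Δ).measurableSet
  set P : ℕ → (Fin (d - 1) → ℝ) → ℝ := fun n y => ∏ i, (probExt d y i) ^ (k n i) with hP
  have hPcont : ∀ n, Continuous (P n) :=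
    fun n => continuous_finset_prod _ fun i _ => (continuous_probExt i).pow _
  have hPnn : ∀ n, ∀ y ∈ Δ, 0 ≤ P n y := by
    intro n y hy
    have hymem : (∀ i, 0 ≤ y i) ∧ ∑ i, y i ≤ 1 := by rwa [hΔ] at hy
    exact Finset.prod_nonneg fun i _ => pow_nonneg (probExt_nonneg hymem i) _
  have hint : ∀ n (H' : (Fin (d - 1) → ℝ) → ℝ), ContinuousOn H' Δ →
      IntegrableOn (fun y => P n y * H' y) Δ :=
    fun n H' hH' => (((hPcont n).continuousOn).mul hH').integrableOn_compact hΔc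
  have hPint : ∀ n, IntegrableOn (P n) Δ :=
    fun n => ((hPcont n).continuousOn).integrableOn_compact hΔc
  have hPnn_ae : ∀ n, 0 ≤ᵐ[volume.restrict Δ] P n := fun n =>
    (ae_restrict_iff' hΔm).mpr (Filter.Eventually.of_forall fun y hy => hPnn n y hy)
  -- a uniform bound for |H y - H x| on Δ
  obtain ⟨C, hC⟩ := hΔc.exists_bound_of_continuousOn hH
  set M : ℝ := C + |H x| with hM
  have hMb : ∀ y ∈ Δ, |H y - H x| ≤ M := by
    intro y hy
    calc |H y - H x| ≤ |H y| + |H x| := abs_sub _ _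
      _ ≤ C + |H x| := by
          have := hC y hy; rw [Real.norm_eq_abs] at this; linarith
  have hM0 : 0 ≤ M := le_trans (abs_nonneg _) (hMb x hxΔ)
  rw [Metric.tendsto_nhds]
  intro ε hε
  -- choose δ from continuity of H at x within Δ
  have hcx : ContinuousWithinAt H Δ x := hH x hxΔ
  rw [Metric.continuousWithinAt_iff] at hcx
  obtain ⟨δ, hδpos, hδ⟩ := hcx (ε / 4) (by positivity)
  obtain ⟨c₁, c₂, r, hc₁0, hc₁c₂, hrpos, hball, hev⟩ :=
    main_est d hd Δ hΔ x hxΔ hxpos k hfreq δ hδpos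
  have hc₂pos : 0 < c₂ := hc₁0.trans_lt hc₁c₂
  set V : ℝ := (volume (Δ \ Metric.ball x δ)).toReal with hV
  have hV0 : 0 ≤ V := ENNReal.toReal_nonneg
  set v : ℝ := (volume (Metric.closedBall x r)).toReal with hv
  have hvpos : 0 < v := by
    rw [hv]
    apply ENNReal.toReal_pos
    · exact (Metric.measure_ball_pos volume x hrpos).trans_le
        (measure_mono Metric.ball_subset_closedBall) |>.ne'
    · exact (measure_closedBall_lt_top).ne
  have hfarm : volume (Δ \ Metric.ball x δ) < ⊤ :=
    (measure_mono Set.diff_subset).trans_lt hΔc.measure_lt_top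
  -- the geometric decay term
  have hT : Tendsto (fun n : ℕ => (M * V / v) * (c₁ / c₂) ^ n) atTop (nhds 0) := by
    have := (tendsto_pow_atTop_nhds_zero_of_lt_one (div_nonneg hc₁0 hc₂pos.le)
      ((div_lt_one hc₂pos).mpr hc₁c₂)).const_mul (M * V / v)
    simpa using this
  have hTev := hT.eventually_lt_const (show (0:ℝ) < ε / 4 by positivity)
  filter_upwards [hev, hTev] with n hn hTn
  obtain ⟨hub, hlb⟩ := hn
  set S : ℝ := ∫ y in Δ, P n y with hS
  -- lower bound for S
  have hSlb : c₂ ^ n * v ≤ S := by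
    have h1 : ∫ y in Metric.closedBall x r, (fun _ => c₂ ^ n) y
        ≤ ∫ y in Metric.closedBall x r, P n y := by
      apply setIntegral_mono_on
      · exact integrableOn_const measure_closedBall_lt_top.ne
      · exact (hPint n).mono_set hball
      · exact Metric.isClosed_closedBall.measurableSet
      · exact fun y hy => hlb y hy
    rw [setIntegral_const, smul_eq_mul, mul_comm] at h1
    refine h1.trans ?_
    exact setIntegral_mono_set (hPint n) (hPnn_ae n)
      (HasSubset.Subset.eventuallyLE hball)
  have hSpos : 0 < S := lt_of_lt_of_le (by positivity) hSlb
  -- upper bound for the far part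
  have hfarb : ∫ y in Δ \ Metric.ball x δ, P n y ≤ c₁ ^ n * V := by
    have h1 : ∫ y in Δ \ Metric.ball x δ, P n y
        ≤ ∫ y in Δ \ Metric.ball x δ, (fun _ => c₁ ^ n) y := by
      apply setIntegral_mono_on
      · exact (hPint n).mono_set Set.diff_subset
      · exact integrableOn_const hfarm.ne
      · exact hΔm.diff Metric.isOpen_ball.measurableSet
      · exact fun y hy => hub y hy
    rwa [setIntegral_const, smul_eq_mul, mul_comm] at h1
  -- main numerator estimate
  have habs_cont : ContinuousOn (fun y => |P n y * (H y - H x)|) Δ :=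
    (((hPcont n).continuousOn).mul (hH.sub continuousOn_const)).abs
  have habs_int : IntegrableOn (fun y => |P n y * (H y - H x)|) Δ :=
    habs_cont.integrableOn_compact hΔc
  have hnum : |(∫ y in Δ, P n y * H y) - H x * S| ≤ (ε / 4) * S + M * (c₁ ^ n * V) := by
    have e1 : (∫ y in Δ, P n y * H y) - H x * S = ∫ y in Δ, P n y * (H y - H x) := by
      have : (fun y => P n y * (H y - H x))
          = fun y => P n y * H y - P n y * H x := by funext y; ring
      rw [this, integral_sub (hint n H hH) (hint n (fun _ => H x) continuousOn_const)]
      congr 1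
      rw [hS, mul_comm, ← integral_mul_const]
    have e2 : |∫ y in Δ, P n y * (H y - H x)| ≤ ∫ y in Δ, |P n y * (H y - H x)| := by
      have := norm_integral_le_integral_norm (μ := volume.restrict Δ)
        (f := fun y => P n y * (H y - H x))
      simp only [Real.norm_eq_abs] at this
      exact this
    have e3 : ∫ y in Δ, |P n y * (H y - H x)|
        = (∫ y in Δ ∩ Metric.ball x δ, |P n y * (H y - H x)|)
          + ∫ y in Δ \ Metric.ball x δ, |P n y * (H y - H x)| :=
      (integral_inter_add_diff Metric.isOpen_ball.measurableSet habs_int).symm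
    have e4 : ∫ y in Δ ∩ Metric.ball x δ, |P n y * (H y - H x)| ≤ (ε / 4) * S := by
      have h1 : ∫ y in Δ ∩ Metric.ball x δ, |P n y * (H y - H x)|
          ≤ ∫ y in Δ ∩ Metric.ball x δ, P n y * (ε / 4) := by
        apply setIntegral_mono_on
        · exact habs_int.mono_set Set.inter_subset_left
        · exact ((hPint n).mono_set Set.inter_subset_left).mul_const _
        · exact hΔm.inter Metric.isOpen_ball.measurableSet
        · intro y hy
          rw [abs_mul, abs_of_nonneg (hPnn n y hy.1)]
          apply mul_le_mul_of_nonneg_left _ (hPnn n y hy.1)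
          have := hδ hy.1 (by simpa [Real.dist_eq, Metric.mem_ball] using hy.2)
          rw [Real.dist_eq] at this
          exact this.le
      refine h1.trans ?_
      rw [show (fun y => P n y * (ε / 4)) = fun y => (ε / 4) * P n y from funext fun y => by ring]
      rw [integral_const_mul]
      apply mul_le_mul_of_nonneg_left _ (by positivity : (0:ℝ) ≤ ε / 4)
      exact setIntegral_mono_set (hPint n) (hPnn_ae n)
        (HasSubset.Subset.eventuallyLE Set.inter_subset_left)
    have e5 : ∫ y in Δ \ Metric.ball x δ, |P n y * (H y - H x)| ≤ M * (c₁ ^ n * V) := by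
      have h1 : ∫ y in Δ \ Metric.ball x δ, |P n y * (H y - H x)|
          ≤ ∫ y in Δ \ Metric.ball x δ, P n y * M := by
        apply setIntegral_mono_on
        · exact habs_int.mono_set Set.diff_subset
        · exact ((hPint n).mono_set Set.diff_subset).mul_const _
        · exact hΔm.diff Metric.isOpen_ball.measurableSet
        · intro y hy
          rw [abs_mul, abs_of_nonneg (hPnn n y hy.1)]
          exact mul_le_mul_of_nonneg_left (hMb y hy.1) (hPnn n y hy.1)
      refine h1.trans ?_
      rw [show (fun y => P n y * M) = fun y => M * P n y from funext fun y => by ring]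
      rw [integral_const_mul]
      exact mul_le_mul_of_nonneg_left hfarb hM0
    rw [e1]
    refine e2.trans ?_
    rw [e3]
    exact add_le_add e4 e5
  -- conclude
  have hfrac : (∫ y in Δ, P n y * H y) / S - H x
      = ((∫ y in Δ, P n y * H y) - H x * S) / S := by
    field_simp
  rw [Real.dist_eq, hfrac, abs_div, abs_of_pos hSpos, div_lt_iff₀ hSpos]
  have hTn0 : (0:ℝ) ≤ (M * V / v) * (c₁ / c₂) ^ n := by positivity
  have heq : M * (c₁ ^ n * V) = ((M * V / v) * (c₁ / c₂) ^ n) * (c₂ ^ n * v) := by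
    rw [div_pow]
    field_simp
  calc |(∫ y in Δ, P n y * H y) - H x * S|
      ≤ (ε / 4) * S + M * (c₁ ^ n * V) := hnum
    _ = (ε / 4) * S + ((M * V / v) * (c₁ / c₂) ^ n) * (c₂ ^ n * v) := by rw [heq]
    _ ≤ (ε / 4) * S + ((M * V / v) * (c₁ / c₂) ^ n) * S := by
        exact add_le_add_right (mul_le_mul_of_nonneg_left hSlb hTn0) _
    _ < (ε / 4) * S + (ε / 4) * S := by
        exact add_lt_add_right (mul_lt_mul_of_pos_right hTn hSpos) _
    _ ≤ ε * S := by nlinarith [mul_nonneg hε.le hSpos.le]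

/-- Localisation of multinomial mixtures: if `k⁽ⁿ⁾/n → x` with `x` in the interior of
the simplex `Δ`, then for continuous `F ≥ 0` and `G > 0` on `Δ`,
`(∫_Δ q(k⁽ⁿ⁾; y) F(y) dy) / (∫_Δ q(k⁽ⁿ⁾; y) G(y) dy) → F(x) / G(x)`. -/
theorem multinomial_mixture_ratio_tendsto
    (d : ℕ) (hd : 2 ≤ d)
    (Δ : Set (Fin (d - 1) → ℝ))
    (hΔ : Δ = {y | (∀ i, 0 ≤ y i) ∧ ∑ i, y i ≤ 1})
    (x : Fin (d - 1) → ℝ) (hxΔ : x ∈ Δ)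
    (hxpos : ∀ i : Fin d, 0 < probExt d x i)
    (k : ℕ → Fin d → ℕ) (hk : ∀ n, ∑ i, k n i = n)
    (hfreq : ∀ i : Fin d,
      Tendsto (fun n : ℕ => (k n i : ℝ) / n) atTop (nhds (probExt d x i)))
    (F G : (Fin (d - 1) → ℝ) → ℝ)
    (hF : ContinuousOn F Δ) (hG : ContinuousOn G Δ)
    (hFnn : ∀ y ∈ Δ, 0 ≤ F y) (hGpos : ∀ y ∈ Δ, 0 < G y) :
    Tendsto
      (fun n : ℕ =>
        (∫ y in Δ, multinomialProb n (k n) (probExt d y) * F y) /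
        (∫ y in Δ, multinomialProb n (k n) (probExt d y) * G y))
      atTop (nhds (F x / G x)) := by
  have hFt := weighted_ratio_tendsto d hd Δ hΔ x hxΔ hxpos k hfreq F hF
  have hGt := weighted_ratio_tendsto d hd Δ hΔ x hxΔ hxpos k hfreq G hG
  have hGx : 0 < G x := hGpos x hxΔ
  have hdiv := hFt.div hGt hGx.ne'
  have hGev := hGt.eventually_const_lt (half_lt_self hGx)
  apply Filter.Tendsto.congr' _ hdiv
  filter_upwards [hGev] with n hn
  set a : ℝ := ∫ y in Δ, (∏ i, (probExt d y i) ^ (k n i)) * F y with hadef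
  set b : ℝ := ∫ y in Δ, (∏ i, (probExt d y i) ^ (k n i)) * G y with hbdef
  set S : ℝ := ∫ y in Δ, ∏ i, (probExt d y i) ^ (k n i) with hSdef
  have hbS : b / S ≠ 0 := ne_of_gt (lt_trans (by positivity) hn)
  have hS0 : S ≠ 0 := by intro h; apply hbS; rw [h, div_zero]
  have hb0 : b ≠ 0 := by intro h; apply hbS; rw [h, zero_div]
  set Cn : ℝ := (Nat.factorial n : ℝ) / ∏ i, ((k n i).factorial : ℝ) with hCndef
  have hCn : 0 < Cn := div_pos (by exact_mod_cast n.factorial_pos)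
    (Finset.prod_pos fun i _ => by exact_mod_cast (k n i).factorial_pos)
  have ha : (fun y => multinomialProb n (k n) (probExt d y) * F y)
      = fun y => Cn * ((∏ i, (probExt d y i) ^ (k n i)) * F y) := by
    funext y; simp only [multinomialProb, hCndef]; ring
  have hb : (fun y => multinomialProb n (k n) (probExt d y) * G y)
      = fun y => Cn * ((∏ i, (probExt d y i) ^ (k n i)) * G y) := by
    funext y; simp only [multinomialProb, hCndef]; ring
  calc a / S / (b / S) = a / b := by field_simp
    _ = (Cn * a) / (Cn * b) := (mul_div_mul_left a b hCn.ne').symm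
    _ = (∫ y in Δ, multinomialProb n (k n) (probExt d y) * F y) /
        (∫ y in Δ, multinomialProb n (k n) (probExt d y) * G y) := by
        rw [ha, hb, integral_const_mul, integral_const_mul, hadef, hbdef]
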